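/- On ℝ⁵ with coordinates (z,w,x,v,y), let θ¹ = dz − 2z dx, θ² = dw + w dx + y((wz+v) dx + z dw − dv), θ³ = (1 + 2yz) dx − y dz, θ⁴ = dv − z dw − (v + wz) dx, θ⁵ = dy + 2y(1+yz) dx − y² dz, and let g be the field of symmetric bilinear forms g = 2θ¹θ² + 2θ³θ⁴ + (θ⁵)². For λ ∈ ℝ let φ_λ be the linear map φ_λ(z,w,x,v,y) = (e^{−2λ} z, e^{2λ} w, e^{−λ} x, e^{λ} v, y). Then for every point q ∈ ℝ⁵ and all tangent vectors u,v' ∈ ℝ⁵, the pullback (φ_λ^* g)(q)(u,v') = g(φ_λ(q))(φ_λ u, φ_λ v') converges, as λ → ∞, to G(u,v'), where G is the constant (flat) form G = 2 dz dw + 2 dx dv + (dy)². -/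

import Mathlib

open Filter

namespace Stmt10

/-- Coordinates: `q 0 = z`, `q 1 = w`, `q 2 = x`, `q 3 = v`, `q 4 = y`.
`θ¹ = dz − 2z dx`. -/
def θ1 (q u : Fin 5 → ℝ) : ℝ := u 0 - 2 * q 0 * u 2

/-- `θ² = dw + w dx + y((wz+v) dx + z dw − dv)`. -/
def θ2 (q u : Fin 5 → ℝ) : ℝ :=
  u 1 + q 1 * u 2 + q 4 * ((q 1 * q 0 + q 3) * u 2 + q 0 * u 1 - u 3)

/-- `θ³ = (1 + 2yz) dx − y dz`. -/
def θ3 (q u : Fin 5 → ℝ) : ℝ := (1 + 2 * q 4 * q 0) * u 2 - q 4 * u 0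

/-- `θ⁴ = dv − z dw − (v + wz) dx`. -/
def θ4 (q u : Fin 5 → ℝ) : ℝ := u 3 - q 0 * u 1 - (q 3 + q 1 * q 0) * u 2

/-- `θ⁵ = dy + 2y(1+yz) dx − y² dz`. -/
def θ5 (q u : Fin 5 → ℝ) : ℝ := u 4 + 2 * q 4 * (1 + q 4 * q 0) * u 2 - q 4 ^ 2 * u 0

/-- The field of symmetric bilinear forms `g = 2θ¹θ² + 2θ³θ⁴ + (θ⁵)²`. -/
def metric (q u v : Fin 5 → ℝ) : ℝ :=
  (θ1 q u * θ2 q v + θ2 q u * θ1 q v) + (θ3 q u * θ4 q v + θ4 q u * θ3 q v) +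
    θ5 q u * θ5 q v

/-- The linear map `φ_λ(z,w,x,v,y) = (e^{−2λ} z, e^{2λ} w, e^{−λ} x, e^{λ} v, y)`. -/
noncomputable def φ (l : ℝ) (q : Fin 5 → ℝ) : Fin 5 → ℝ :=
  ![Real.exp (-2 * l) * q 0, Real.exp (2 * l) * q 1, Real.exp (-l) * q 2,
    Real.exp l * q 3, q 4]

/-- The constant flat form `G = 2 dz dw + 2 dx dv + (dy)²`. -/
def flatG (u v : Fin 5 → ℝ) : ℝ :=
  u 0 * v 1 + u 1 * v 0 + u 2 * v 3 + u 3 * v 2 + u 4 * v 4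

/-- Rescaled expression as polynomial in `t = exp (-l)`. -/
def f (q u v : Fin 5 → ℝ) (t : ℝ) : ℝ :=
  (fun s s' : Fin 5 → ℝ =>
    (s 0 - 2*t*q 0*s 2) *
      (s' 1 + t*q 1*s' 2 + q 4*(t^3*q 1*q 0*s' 2 + t^2*q 3*s' 2 + t^2*q 0*s' 1 - t*s' 3)))
    u v +
  (fun s s' : Fin 5 → ℝ =>
    (s 0 - 2*t*q 0*s 2) *
      (s' 1 + t*q 1*s' 2 + q 4*(t^3*q 1*q 0*s' 2 + t^2*q 3*s' 2 + t^2*q 0*s' 1 - t*s' 3)))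
    v u +
  (fun s s' : Fin 5 → ℝ =>
    ((1 + 2*q 4*t^2*q 0)*s 2 - t*q 4*s 0) *
      (s' 3 - t*(q 0*s' 1 + q 3*s' 2) - t^2*q 1*q 0*s' 2)) u v +
  (fun s s' : Fin 5 → ℝ =>
    ((1 + 2*q 4*t^2*q 0)*s 2 - t*q 4*s 0) *
      (s' 3 - t*(q 0*s' 1 + q 3*s' 2) - t^2*q 1*q 0*s' 2)) v u +
  (u 4 + 2*q 4*(1 + q 4*t^2*q 0)*t*u 2 - t^2*q 4^2*u 0) *
  (v 4 + 2*q 4*(1 + q 4*t^2*q 0)*t*v 2 - t^2*q 4^2*v 0)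

set_option maxHeartbeats 2000000 in
lemma key (q u v' : Fin 5 → ℝ) (l : ℝ) :
    metric (φ l q) (φ l u) (φ l v') = f q u v' (Real.exp (-l)) := by
  have h := Real.exp_ne_zero l
  simp only [metric, θ1, θ2, θ3, θ4, θ5, φ, f, Matrix.cons_val_zero, Matrix.cons_val_one,
    Matrix.head_cons, Matrix.cons_val_two, Matrix.tail_cons, Matrix.cons_val_three,
    Matrix.cons_val_four, Matrix.cons_val_succ]
  rw [show (-2:ℝ)*l = -(l+l) by ring, show (2:ℝ)*l = l+l by ring, Real.exp_neg,
    Real.exp_neg, Real.exp_add]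
  field_simp
  ring

/-- For every point `q` and tangent vectors `u, v'`, the pullback
`(φ_λ^* g)(q)(u,v') = g(φ_λ q)(φ_λ u, φ_λ v')` converges to `G(u,v')` as `λ → ∞`. -/
theorem pullback_tendsto_flat (q u v' : Fin 5 → ℝ) :
    Tendsto (fun l : ℝ => metric (φ l q) (φ l u) (φ l v')) atTop (nhds (flatG u v')) := by
  have h1 : Tendsto (fun l : ℝ => Real.exp (-l)) atTop (nhds 0) :=
    Real.tendsto_exp_atBot.comp tendsto_neg_atTop_atBot
  have hc : Continuous (f q u v') := by unfold f; fun_prop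
  have h2 := (hc.continuousAt (x := 0)).tendsto.comp h1
  have h0 : f q u v' 0 = flatG u v' := by simp [f, flatG]; ring
  simpa [Function.comp_def, key, h0] using h2

end Stmt10
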